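/- Let ξ be a complex random variable with mean zero, unit variance (E|ξ|² = 1), and finite p-th moment μ_p^p = E|ξ|^p < ∞ for some p > 2. Then ξ is κ-spread with κ = 3(3μ_p^p)^{1/(p−2)}; that is, Var[ξ·1(|ξ − Eξ| ≤ κ)] ≥ 1/κ. -/

import Mathlib

open MeasureTheory

/-- The variance of a complex random variable `X` (mean-square deviation from its mean). -/
noncomputable def cVar {Ω : Type*} [MeasurableSpace Ω] (μ : Measure Ω) (X : Ω → ℂ) : ℝ :=
  ∫ ω, ‖X ω - ∫ ω', X ω' ∂μ‖ ^ 2 ∂μ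

/-- A complex random variable with mean zero, unit variance and finite `p`-th moment
`E|ξ|ᵖ = mp` for some `p > 2` is `κ`-spread with `κ = 3(3·mp)^{1/(p−2)}`, i.e. the variance
of the truncation `ξ·1(|ξ − Eξ| ≤ κ)` is at least `1/κ`. -/
theorem spread_of_finite_moment
    {Ω : Type*} [MeasurableSpace Ω] (μ : Measure Ω) [IsProbabilityMeasure μ]
    (ξ : Ω → ℂ) (p mp : ℝ) (hp : 2 < p)
    (hmem : MemLp ξ (ENNReal.ofReal p) μ)
    (hmean : ∫ ω, ξ ω ∂μ = 0)
    (hvar : ∫ ω, ‖ξ ω‖ ^ 2 ∂μ = 1)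
    (hmp : ∫ ω, ‖ξ ω‖ ^ p ∂μ = mp) :
    1 / (3 * (3 * mp) ^ (1 / (p - 2))) ≤
      cVar μ (fun ω =>
        if ‖ξ ω - ∫ ω', ξ ω' ∂μ‖ ≤ 3 * (3 * mp) ^ (1 / (p - 2)) then ξ ω else 0) := by
  have hp0 : (0:ℝ) < p := by linarith
  have hp2 : (0:ℝ) < p - 2 := by linarith
  -- integrability facts
  have hξm : AEStronglyMeasurable ξ μ := hmem.aestronglyMeasurable
  have hintp : Integrable (fun ω => ‖ξ ω‖ ^ p) μ := by
    have h := hmem.integrable_norm_rpow ((ENNReal.ofReal_pos.mpr hp0).ne') ENNReal.ofReal_ne_top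
    rwa [ENNReal.toReal_ofReal hp0.le] at h
  have hmem2 : MemLp ξ 2 μ := by
    refine hmem.mono_exponent ?_
    rw [show (2:ENNReal) = ENNReal.ofReal 2 by norm_num]
    exact ENNReal.ofReal_le_ofReal hp.le
  have hξint : Integrable ξ μ := hmem2.integrable (by norm_num)
  have hint2 : Integrable (fun ω => ‖ξ ω‖ ^ 2) μ := by
    have h := hmem2.integrable_norm_rpow (by norm_num) (by norm_num)
    simpa [Real.rpow_two] using h
  -- mp ≥ 1 via weighted AM-GM
  have hmp1 : 1 ≤ mp := by
    have key : ∀ ω, ‖ξ ω‖ ^ 2 ≤ (1 - 2/p) + (2/p) * ‖ξ ω‖ ^ p := by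
      intro ω
      have hw1 : (0:ℝ) ≤ 1 - 2/p := by
        rw [sub_nonneg, div_le_one hp0]; linarith
      have hw2 : (0:ℝ) ≤ 2/p := by positivity
      have h := Real.geom_mean_le_arith_mean2_weighted hw1 hw2 zero_le_one
        (Real.rpow_nonneg (norm_nonneg (ξ ω)) p) (by ring)
      calc ‖ξ ω‖ ^ 2 = 1 ^ (1 - 2/p) * (‖ξ ω‖ ^ p) ^ (2/p) := by
            have hpp : p * (2/p) = 2 := by field_simp
            rw [Real.one_rpow, one_mul, ← Real.rpow_mul (norm_nonneg _), hpp,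
              Real.rpow_two]
        _ ≤ (1 - 2/p) * 1 + (2/p) * ‖ξ ω‖ ^ p := h
        _ = (1 - 2/p) + (2/p) * ‖ξ ω‖ ^ p := by ring
    have hint : ∫ ω, ‖ξ ω‖ ^ 2 ∂μ ≤ ∫ ω, ((1 - 2/p) + (2/p) * ‖ξ ω‖ ^ p) ∂μ :=
      integral_mono hint2 ((integrable_const _).add (hintp.const_mul _)) key
    rw [hvar, integral_add (integrable_const _) (hintp.const_mul _), integral_const,
      integral_const_mul, hmp, probReal_univ] at hint
    simp only [ENNReal.toReal_one, one_smul, smul_eq_mul] at hint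
    have h2p : (0:ℝ) < 2/p := by positivity
    nlinarith
  -- basic facts about κ
  set κ : ℝ := 3 * (3 * mp) ^ (1 / (p - 2)) with hκdef
  have h3mp : (1:ℝ) ≤ 3 * mp := by linarith
  have ht1 : (1:ℝ) ≤ (3 * mp) ^ (1 / (p - 2)) :=
    Real.one_le_rpow h3mp (by positivity)
  have hκ3 : (3:ℝ) ≤ κ := by
    calc (3:ℝ) = 3 * 1 := by ring
      _ ≤ κ := by rw [hκdef]; nlinarith
  have hκpos : (0:ℝ) < κ := by linarith
  have hκpow : 3 * mp ≤ κ ^ (p - 2) := by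
    rw [hκdef, Real.mul_rpow (by norm_num) (by positivity)]
    have h1 : ((3*mp) ^ (1/(p-2))) ^ (p-2) = 3*mp := by
      rw [← Real.rpow_mul (by positivity), one_div_mul_cancel hp2.ne', Real.rpow_one]
    have h3 : (1:ℝ) ≤ (3:ℝ) ^ (p-2) := Real.one_le_rpow (by norm_num) hp2.le
    rw [h1]
    nlinarith
  have hκp2pos : (0:ℝ) < κ ^ (p - 2) := Real.rpow_pos_of_pos hκpos _
  -- rewrite the goal using mean zero
  simp only [hmean, sub_zero]
  set η : Ω → ℂ := fun ω => if ‖ξ ω‖ ≤ κ then ξ ω else 0 with hηdef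
  -- measurability and integrability of η
  obtain ⟨ξ', hξ'sm, hξξ'⟩ := hξm
  have hηm : AEStronglyMeasurable η μ := by
    refine ⟨fun ω => if ‖ξ' ω‖ ≤ κ then ξ' ω else 0, ?_, ?_⟩
    · exact StronglyMeasurable.ite
        (measurableSet_le hξ'sm.measurable.norm measurable_const)
        hξ'sm stronglyMeasurable_const
    · filter_upwards [hξξ'] with ω h
      simp only [hηdef, h]
  have hηb : ∀ ω, ‖η ω‖ ≤ κ := by
    intro ω
    by_cases h : ‖ξ ω‖ ≤ κ
    · simp only [hηdef, if_pos h]; exact h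
    · simp only [hηdef, if_neg h, norm_zero]; exact hκpos.le
  have hηint : Integrable η μ :=
    Integrable.mono' (integrable_const κ) hηm (ae_of_all _ hηb)
  have hη2int : Integrable (fun ω => ‖η ω‖ ^ 2) μ := by
    refine Integrable.mono' (integrable_const (κ^2)) ?_ (ae_of_all _ ?_)
    · exact (hηm.norm.mul hηm.norm).congr (by filter_upwards with ω; simp [sq])
    · intro ω
      rw [Real.norm_eq_abs, abs_of_nonneg (by positivity)]
      exact pow_le_pow_left₀ (norm_nonneg _) (hηb ω) 2
  set c : ℂ := ∫ ω, η ω ∂μ with hcdef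
  -- variance expansion
  have hexp : cVar μ η = (∫ ω, ‖η ω‖ ^ 2 ∂μ) - ‖c‖ ^ 2 := by
    have hinner_int : Integrable (fun ω => (inner ℝ c (η ω) : ℝ)) μ := by
      refine Integrable.mono' (integrable_const (‖c‖ * κ)) ?_ (ae_of_all _ ?_)
      · exact AEStronglyMeasurable.inner aestronglyMeasurable_const hηm
      · intro ω
        calc ‖(inner ℝ c (η ω) : ℝ)‖ ≤ ‖c‖ * ‖η ω‖ := norm_inner_le_norm c (η ω)
          _ ≤ ‖c‖ * κ := by
              exact mul_le_mul_of_nonneg_left (hηb ω) (norm_nonneg _)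
    have hptw : ∀ ω, ‖η ω - c‖ ^ 2 = ‖η ω‖ ^ 2 - 2 * (inner ℝ c (η ω) : ℝ) + ‖c‖ ^ 2 := by
      intro ω
      rw [norm_sub_sq_real, real_inner_comm]
    unfold cVar
    rw [← hcdef]
    calc ∫ ω, ‖η ω - c‖ ^ 2 ∂μ
        = ∫ ω, (‖η ω‖ ^ 2 - 2 * (inner ℝ c (η ω) : ℝ) + ‖c‖ ^ 2) ∂μ := by
          exact integral_congr_ae (ae_of_all _ hptw)
      _ = (∫ ω, (‖η ω‖ ^ 2 - 2 * (inner ℝ c (η ω) : ℝ)) ∂μ) + ∫ _ω, ‖c‖ ^ 2 ∂μ := by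
          have hsub : Integrable (fun ω => ‖η ω‖ ^ 2 - 2 * (inner ℝ c (η ω) : ℝ)) μ :=
            hη2int.sub (hinner_int.const_mul 2)
          rw [integral_add hsub (integrable_const _)]
      _ = (∫ ω, ‖η ω‖ ^ 2 ∂μ) - 2 * (inner ℝ c c : ℝ) + ‖c‖ ^ 2 := by
          have hcm : Integrable (fun ω => 2 * (inner ℝ c (η ω) : ℝ)) μ :=
            hinner_int.const_mul 2
          rw [integral_sub hη2int hcm, integral_const_mul,
            integral_inner hηint c, integral_const, probReal_univ, ← hcdef]
          simp
      _ = (∫ ω, ‖η ω‖ ^ 2 ∂μ) - ‖c‖ ^ 2 := by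
          rw [real_inner_self_eq_norm_sq]; ring
  -- tail bound for the second moment
  have hη2low : 1 - mp / κ ^ (p - 2) ≤ ∫ ω, ‖η ω‖ ^ 2 ∂μ := by
    have hdle : ∀ ω, ‖ξ ω‖ ^ 2 - ‖η ω‖ ^ 2 ≤ ‖ξ ω‖ ^ p / κ ^ (p - 2) := by
      intro ω
      by_cases h : ‖ξ ω‖ ≤ κ
      · simp only [hηdef, if_pos h, sub_self]
        positivity
      · push_neg at h
        simp only [hηdef, if_neg (not_le.mpr h), norm_zero]
        rw [le_div_iff₀ hκp2pos]
        have hn3 : (0:ℝ) < ‖ξ ω‖ := lt_trans hκpos h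
        have h1 : κ ^ (p-2) ≤ ‖ξ ω‖ ^ (p-2) :=
          Real.rpow_le_rpow hκpos.le h.le hp2.le
        have h2 : ‖ξ ω‖ ^ p = ‖ξ ω‖ ^ 2 * ‖ξ ω‖ ^ (p-2) := by
          rw [← Real.rpow_natCast ‖ξ ω‖ 2, ← Real.rpow_add hn3]
          norm_num
        rw [h2]
        nlinarith [mul_le_mul_of_nonneg_left h1 (sq_nonneg ‖ξ ω‖)]
    have hint : ∫ ω, (‖ξ ω‖ ^ 2 - ‖η ω‖ ^ 2) ∂μ ≤ ∫ ω, ‖ξ ω‖ ^ p / κ ^ (p-2) ∂μ :=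
      integral_mono (hint2.sub hη2int) (hintp.div_const _) hdle
    rw [integral_sub hint2 hη2int, hvar, integral_div, hmp] at hint
    linarith
  -- bound on the mean of η
  have hcb : ‖c‖ ≤ mp / κ ^ (p - 1) := by
    have hceq : c = -∫ ω, (ξ ω - η ω) ∂μ := by
      rw [integral_sub hξint hηint, hmean, ← hcdef]
      ring
    have hκp1pos : (0:ℝ) < κ ^ (p - 1) := Real.rpow_pos_of_pos hκpos _
    have hdle : ∀ ω, ‖ξ ω - η ω‖ ≤ ‖ξ ω‖ ^ p / κ ^ (p - 1) := by
      intro ω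
      by_cases h : ‖ξ ω‖ ≤ κ
      · simp only [hηdef, if_pos h, sub_self, norm_zero]
        positivity
      · push_neg at h
        simp only [hηdef, if_neg (not_le.mpr h), sub_zero]
        rw [le_div_iff₀ hκp1pos]
        have hn3 : (0:ℝ) < ‖ξ ω‖ := lt_trans hκpos h
        have h1 : κ ^ (p-1) ≤ ‖ξ ω‖ ^ (p-1) :=
          Real.rpow_le_rpow hκpos.le h.le (by linarith)
        have h2 : ‖ξ ω‖ ^ p = ‖ξ ω‖ * ‖ξ ω‖ ^ (p-1) := by
          nth_rewrite 2 [← Real.rpow_one ‖ξ ω‖]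
          rw [← Real.rpow_add hn3]
          norm_num
        rw [h2]
        exact mul_le_mul_of_nonneg_left h1 hn3.le
    calc ‖c‖ = ‖∫ ω, (ξ ω - η ω) ∂μ‖ := by rw [hceq, norm_neg]
      _ ≤ ∫ ω, ‖ξ ω - η ω‖ ∂μ := norm_integral_le_integral_norm _
      _ ≤ ∫ ω, ‖ξ ω‖ ^ p / κ ^ (p-1) ∂μ := by
          exact integral_mono (hξint.sub hηint).norm (hintp.div_const _) hdle
      _ = mp / κ ^ (p - 1) := by rw [integral_div, hmp]
  -- numeric conclusion
  have hS : mp / κ ^ (p - 2) ≤ 1/3 := by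
    rw [div_le_iff₀ hκp2pos]
    nlinarith
  have hc9 : ‖c‖ ≤ 1/9 := by
    have hsplit : κ ^ (p - 1) = κ ^ (p - 2) * κ := by
      rw [show p - 1 = (p-2) + 1 by ring, Real.rpow_add hκpos, Real.rpow_one]
    have : mp / κ ^ (p - 1) ≤ (1/3) / 3 := by
      rw [hsplit, ← div_div]
      exact div_le_div₀ (by norm_num) hS (by norm_num) hκ3
    calc ‖c‖ ≤ mp / κ ^ (p-1) := hcb
      _ ≤ (1/3)/3 := this
      _ = 1/9 := by norm_num
  have hc2 : ‖c‖ ^ 2 ≤ 1/81 := by nlinarith [norm_nonneg c]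
  have hfin : 1/κ ≤ 1/3 := by
    apply one_div_le_one_div_of_le (by norm_num) hκ3
  rw [one_div]
  calc κ⁻¹ = 1/κ := (one_div κ).symm
    _ ≤ 1/3 := hfin
    _ ≤ (1 - mp / κ ^ (p-2)) - ‖c‖^2 := by linarith
    _ ≤ cVar μ η := by rw [hexp]; linarith
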